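/- Let λ_1 be the second eigenvalue of -u'' = λ u on (-1,1) with Robin conditions u'(±1) = ∓α u(±1), α ∈ ℝ. Then α^2 + λ_1 > 0. Consequently for the potential a x with a > 0, α^2 + λ_1^{ax} + a > 0, where λ_1^{ax} is the second Robin eigenvalue of -u'' + axu = λu, given λ_1^{ax} + a ≥ λ_1. -/

import Mathlib

open Set

theorem second_eigenvalue_lower_bound
    (α lam1 : ℝ) (u u' u'' : ℝ → ℝ)
    (hd1 : ∀ x ∈ Icc (-1:ℝ) 1, HasDerivWithinAt u (u' x) (Icc (-1:ℝ) 1) x)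
    (hd2 : ∀ x ∈ Icc (-1:ℝ) 1, HasDerivWithinAt u' (u'' x) (Icc (-1:ℝ) 1) x)
    (heq : ∀ x ∈ Icc (-1:ℝ) 1, -u'' x = lam1 * u x)
    (hbcR : u' 1 = -α * u 1) (hbcL : u' (-1) = α * u (-1))
    (hne : ∃ x ∈ Icc (-1:ℝ) 1, u x ≠ 0)
    -- u is a second eigenfunction: it has exactly one interior zero
    (x0 : ℝ) (hx0 : x0 ∈ Ioo (-1:ℝ) 1) (hx0z : u x0 = 0)
    (huniq : ∀ x ∈ Ioo (-1:ℝ) 1, u x = 0 → x = x0) :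
    0 < α ^ 2 + lam1 ∧
      ∀ a lam1ax : ℝ, 0 < a → lam1 ≤ lam1ax + a → 0 < α ^ 2 + lam1ax + a := by
  have key : 0 < α ^ 2 + lam1 := by
    by_contra hcon
    push_neg at hcon
    have hcontu : ContinuousOn u (Icc (-1:ℝ) 1) := fun x hx => (hd1 x hx).continuousWithinAt
    have hcontu' : ContinuousOn u' (Icc (-1:ℝ) 1) := fun x hx => (hd2 x hx).continuousWithinAt
    set E : ℝ → ℝ := fun x => u' x ^ 2 + lam1 * u x ^ 2 with hEdef
    -- E has zero derivative on [-1,1]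
    have hEd : ∀ x ∈ Icc (-1:ℝ) 1, HasDerivWithinAt E 0 (Icc (-1:ℝ) 1) x := by
      intro x hx
      have h1 := hd1 x hx
      have h2 := hd2 x hx
      have hD : HasDerivWithinAt E
          ((2 : ℕ) * u' x ^ 1 * u'' x + lam1 * ((2 : ℕ) * u x ^ 1 * u' x))
          (Icc (-1:ℝ) 1) x := (h2.pow 2).add ((h1.pow 2).const_mul lam1)
      have hu'' : u'' x = -(lam1 * u x) := by linarith [heq x hx]
      have : ((2 : ℕ) * u' x ^ 1 * u'' x + lam1 * ((2 : ℕ) * u x ^ 1 * u' x)) = 0 := by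
        rw [hu'']; ring
      rwa [this] at hD
    have hEcont : ContinuousOn E (Icc (-1:ℝ) 1) := by
      apply ContinuousOn.add
      · exact hcontu'.pow 2
      · exact continuousOn_const.mul (hcontu.pow 2)
    have hEconst : ∀ x ∈ Icc (-1:ℝ) 1, E x = E (-1) := by
      apply constant_of_has_deriv_right_zero hEcont
      intro x hx
      refine (hEd x ⟨hx.1, hx.2.le⟩).mono_of_mem_nhdsWithin ?_
      refine mem_nhdsWithin.2 ⟨Iio 1, isOpen_Iio, hx.2, ?_⟩
      rintro y ⟨hy1, hy2⟩
      exact ⟨le_trans hx.1 hy2, le_of_lt hy1⟩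
    have hx0m : x0 ∈ Icc (-1:ℝ) 1 := ⟨hx0.1.le, hx0.2.le⟩
    have h1m : (1:ℝ) ∈ Icc (-1:ℝ) 1 := by norm_num
    have hE1 : E 1 ≤ 0 := by
      have : E 1 = (α ^ 2 + lam1) * u 1 ^ 2 := by
        simp only [hEdef, hbcR]; ring
      rw [this]
      exact mul_nonpos_of_nonpos_of_nonneg hcon (sq_nonneg _)
    have hEx0 : E x0 = u' x0 ^ 2 := by simp [hEdef, hx0z]
    have hEzero : ∀ x ∈ Icc (-1:ℝ) 1, u' x ^ 2 + lam1 * u x ^ 2 = 0 := by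
      have e1 := hEconst 1 h1m
      have e2 := hEconst x0 hx0m
      intro x hx
      have e3 := hEconst x hx
      have : E x = 0 := by
        nlinarith [sq_nonneg (u' x0)]
      simpa [hEdef] using this
    -- Gronwall-type argument on [x0, 1]
    set μ : ℝ := Real.sqrt |lam1| with hμdef
    have hμ0 : 0 ≤ μ := Real.sqrt_nonneg _
    have hμsq : μ ^ 2 = |lam1| := Real.sq_sqrt (abs_nonneg _)
    set g : ℝ → ℝ := fun x => u x ^ 2 * Real.exp (-(2 * μ * x)) with hgdef
    have hsub : Icc x0 (1:ℝ) ⊆ Icc (-1:ℝ) 1 := Icc_subset_Icc hx0.1.le le_rfl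
    have hgcont : ContinuousOn g (Icc x0 1) := by
      apply ContinuousOn.mul
      · exact (hcontu.mono hsub).pow 2
      · exact (Real.continuous_exp.comp ((continuous_const.mul continuous_id).neg)).continuousOn
    have hgderiv : ∀ x ∈ interior (Icc x0 (1:ℝ)),
        HasDerivAt g ((2 * u x * u' x - 2 * μ * u x ^ 2) * Real.exp (-(2 * μ * x))) x := by
      rw [interior_Icc]
      intro x hx
      have hxm : x ∈ Icc (-1:ℝ) 1 := hsub ⟨hx.1.le, hx.2.le⟩
      have hnbd : Icc (-1:ℝ) 1 ∈ nhds x :=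
        Icc_mem_nhds (lt_of_lt_of_le hx0.1 (le_of_lt hx.1)) hx.2
      have hu : HasDerivAt u (u' x) x := (hd1 x hxm).hasDerivAt hnbd
      have hin : HasDerivAt (fun y => -(2 * μ * y)) (-(2 * μ)) x := by
        exact (((hasDerivAt_id' x).const_mul (2 * μ)).neg).congr_deriv (by ring)
      have hexp : HasDerivAt (fun y => Real.exp (-(2 * μ * y)))
          (Real.exp (-(2 * μ * x)) * -(2 * μ)) x := hin.exp
      have := (hu.fun_pow 2).mul hexp
      exact this.congr_deriv (by push_cast; ring)
    have hganti : AntitoneOn g (Icc x0 1) := by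
      apply antitoneOn_of_deriv_nonpos (convex_Icc _ _) hgcont
      · intro x hx
        exact (hgderiv x hx).differentiableAt.differentiableWithinAt
      · intro x hx
        rw [(hgderiv x hx).deriv]
        have hxm : x ∈ Icc (-1:ℝ) 1 := by
          rw [interior_Icc] at hx
          exact hsub ⟨hx.1.le, hx.2.le⟩
        have hEx := hEzero x hxm
        have hsq : u' x ^ 2 ≤ μ ^ 2 * u x ^ 2 := by
          rw [hμsq]
          nlinarith [abs_nonneg lam1, neg_abs_le lam1, sq_nonneg (u x)]
        have hkey : 2 * u x * u' x - 2 * μ * u x ^ 2 ≤ 0 := by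
          nlinarith [sq_nonneg (μ * u x - u' x), sq_nonneg (μ * u x + u' x),
            mul_nonneg hμ0 (sq_nonneg (u x)), sq_nonneg (u x), sq_nonneg (u' x)]
        have hexp0 : (0:ℝ) < Real.exp (-(2 * μ * x)) := Real.exp_pos _
        exact mul_nonpos_of_nonpos_of_nonneg hkey hexp0.le
    -- conclude u vanishes at the midpoint of (x0, 1)
    set y : ℝ := (x0 + 1) / 2 with hydef
    have hx0lt1 : x0 < 1 := hx0.2
    have hylt : x0 < y := by rw [hydef]; linarith
    have hylt1 : y < 1 := by rw [hydef]; linarith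
    have hym : y ∈ Icc x0 1 := ⟨hylt.le, hylt1.le⟩
    have hgy : g y ≤ g x0 := hganti ⟨le_rfl, hx0lt1.le⟩ hym hylt.le
    have hgx0 : g x0 = 0 := by simp [hgdef, hx0z]
    have hgynn : 0 ≤ g y := mul_nonneg (sq_nonneg _) (Real.exp_pos _).le
    have huy : u y = 0 := by
      have : g y = 0 := le_antisymm (hgx0 ▸ hgy) hgynn
      have := mul_eq_zero.1 this
      rcases this with h | h
      · exact pow_eq_zero_iff (by norm_num) |>.1 h
      · exact absurd h (Real.exp_pos _).ne'
    have heqy := huniq y ⟨lt_trans hx0.1 hylt, hylt1⟩ huy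
    rw [heqy] at hylt
    exact lt_irrefl _ hylt
  exact ⟨key, fun a lam1ax ha hle => by linarith⟩
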